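/- Unconditional solvability of the implicit step: let Ω_h ⊂ hℤ³ be finite with boundary ∂Ω_h, and let u^n : Ω_h → ℝ³ satisfy 𝒟·u^n = 0 on Ω_h∖∂Ω_h and u^n = 0 on ∂Ω_h. Then for any mesh sizes h, τ > 0 and any data f^{n+1} : Ω_h → ℝ³, the implicit finite-difference system (u_i^{n+½}(x) − u_i^n(x))/τ = −Σ_j ( u_j^n(x−he^j) D_j⁺u_i^{n+½}(x−he^j) + u_j^n(x) D_j⁺u_i^{n+½}(x) )/2 + Σ_j D_j² u_i^{n+½}(x) + f_i^{n+1}(x) for x ∈ Ω_h∖∂Ω_h, i = 1,2,3, together with u^{n+½} = 0 on ∂Ω_h, has a unique solution u^{n+½} : Ω_h → ℝ³. -/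

import Mathlib

open Finset MeasureTheory Set Filter

/-- Standard basis vector `e^i` of the integer grid `ℤ³` (grid points `x` represent `h•x ∈ hℤ³`). -/
def gE (i : Fin 3) : Fin 3 → ℤ := fun j => if j = i then 1 else 0

/-- Forward difference quotient `D_i⁺φ(x) = (φ(x+he^i) − φ(x))/h`. -/
noncomputable def Dp (h : ℝ) (i : Fin 3) (φ : (Fin 3 → ℤ) → ℝ) (x : Fin 3 → ℤ) : ℝ :=
  (φ (x + gE i) - φ x) / h

/-- Centered second difference `D_i²φ(x) = (φ(x+he^i)+φ(x−he^i)−2φ(x))/h²`. -/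
noncomputable def Dtwo (h : ℝ) (i : Fin 3) (φ : (Fin 3 → ℤ) → ℝ) (x : Fin 3 → ℤ) : ℝ :=
  (φ (x + gE i) + φ (x - gE i) - 2 * φ x) / h ^ 2

/-- Discrete (forward) gradient `𝒟φ`. -/
noncomputable def dgrad (h : ℝ) (φ : (Fin 3 → ℤ) → ℝ) (x : Fin 3 → ℤ) : Fin 3 → ℝ :=
  fun i => Dp h i φ x

/-- Discrete (backward) divergence `𝒟·w`. -/
noncomputable def ddiv (h : ℝ) (w : (Fin 3 → ℤ) → Fin 3 → ℝ) (x : Fin 3 → ℤ) : ℝ :=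
  ∑ i, (w x i - w (x - gE i) i) / h

/-- Grid boundary `∂Ω_h = {x ∈ Ω_h | {x ± he^i} ⊄ Ω_h}`. -/
def gBdry (Ω : Finset (Fin 3 → ℤ)) : Finset (Fin 3 → ℤ) :=
  Ω.filter fun x => ¬ (∀ i, (x + gE i) ∈ Ω ∧ (x - gE i) ∈ Ω)


lemma sum_shift (F : (Fin 3 → ℤ) → ℝ) (S B : Finset (Fin 3 → ℤ)) (c : Fin 3 → ℤ)
    (hF : ∀ x, F x ≠ 0 → x ∈ S) (hB : ∀ y ∈ S, y - c ∈ B) :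
    ∑ x ∈ B, F (x + c) = ∑ x ∈ S, F x := by
  have himg : ∑ x ∈ B.image (· + c), F x = ∑ x ∈ B, F (x + c) :=
    Finset.sum_image (by intro x _ y _ hxy; exact add_right_cancel hxy)
  rw [← himg]
  refine (Finset.sum_subset ?_ ?_).symm
  · intro y hy
    exact Finset.mem_image.mpr ⟨y - c, hB y hy, by simp⟩
  · intro x _ hx
    by_contra hne
    exact hx (hF x hne)

lemma conv_core (T B : Finset (Fin 3 → ℤ)) (e : Fin 3 → ℤ) (φ a : (Fin 3 → ℤ) → ℝ)
    (hφ : ∀ x, φ x ≠ 0 → x ∈ T) (ha : ∀ x, a x ≠ 0 → x ∈ T)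
    (hB0 : ∀ y ∈ T, y ∈ B) (hBp : ∀ y ∈ T, y + e ∈ B) (hBm : ∀ y ∈ T, y - e ∈ B) :
    ∑ x ∈ T, φ x * (a (x - e) * (φ x - φ (x - e)) + a x * (φ (x + e) - φ x))
      = ∑ x ∈ T, (a (x - e) - a x) * φ x ^ 2 := by
  have hTB : T ⊆ B := fun y hy => hB0 y hy
  set F : (Fin 3 → ℤ) → ℝ := fun y => φ (y + e) * (a y * (φ (y + e) - φ y)) with hF
  set G : (Fin 3 → ℤ) → ℝ := fun y => a (y - e) * φ y ^ 2 with hG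
  have e1 : ∑ x ∈ T, φ x * (a (x - e) * (φ x - φ (x - e)) + a x * (φ (x + e) - φ x))
      = ∑ x ∈ B, φ x * (a (x - e) * (φ x - φ (x - e)) + a x * (φ (x + e) - φ x)) := by
    refine Finset.sum_subset hTB ?_
    intro x _ hx
    have hz : φ x = 0 := by by_contra hne; exact hx (hφ x hne)
    simp [hz]
  have e4 : ∑ x ∈ B, φ x * (a (x - e) * (φ x - φ (x - e)) + a x * (φ (x + e) - φ x))
      = (∑ x ∈ B, F (x + -e)) + ∑ x ∈ B, φ x * (a x * (φ (x + e) - φ x)) := by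
    rw [← Finset.sum_add_distrib]
    refine Finset.sum_congr rfl ?_
    intro x _
    have h1 : x + -e + e = x := neg_add_cancel_right x e
    simp only [hF, h1, ← sub_eq_add_neg]
    ring
  have e2 : ∑ x ∈ B, F (x + -e) = ∑ x ∈ T, F x := by
    refine sum_shift F T B (-e) ?_ ?_
    · intro x hx
      refine ha x ?_
      intro h0; exact hx (by simp [hF, h0])
    · intro y hy; simpa [sub_neg_eq_add] using hBp y hy
  have e3 : ∑ x ∈ T, F x = ∑ x ∈ B, F x := by
    refine Finset.sum_subset hTB ?_
    intro x _ hx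
    have hz : a x = 0 := by by_contra hne; exact hx (ha x hne)
    simp [hF, hz]
  have e5 : ∑ x ∈ B, F x + ∑ x ∈ B, φ x * (a x * (φ (x + e) - φ x))
      = ∑ x ∈ B, a x * (φ (x + e) ^ 2 - φ x ^ 2) := by
    rw [← Finset.sum_add_distrib]
    exact Finset.sum_congr rfl fun x _ => by simp only [hF]; ring
  have e6 : ∑ x ∈ B, a x * (φ (x + e) ^ 2 - φ x ^ 2)
      = (∑ x ∈ B, G (x + e)) - ∑ x ∈ B, a x * φ x ^ 2 := by
    rw [← Finset.sum_sub_distrib]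
    refine Finset.sum_congr rfl fun x _ => ?_
    simp only [hG, add_sub_cancel_right]
    ring
  have e7 : ∑ x ∈ B, G (x + e) = ∑ x ∈ T.image (· + e), G x := by
    refine sum_shift G (T.image (· + e)) B e ?_ ?_
    · intro x hx
      have haz : a (x - e) ≠ 0 := by intro h0; exact hx (by simp [hG, h0])
      exact Finset.mem_image.mpr ⟨x - e, ha _ haz, by simp⟩
    · intro y hy
      obtain ⟨t, ht, rfl⟩ := Finset.mem_image.mp hy
      simpa using hB0 t ht
  have e8 : ∑ x ∈ T.image (· + e), G x = ∑ x ∈ B, G x := by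
    refine Finset.sum_subset ?_ ?_
    · intro y hy
      obtain ⟨t, ht, rfl⟩ := Finset.mem_image.mp hy
      exact hBp t ht
    · intro x _ hx
      have hz : a (x - e) = 0 := by
        by_contra hne
        exact hx (Finset.mem_image.mpr ⟨x - e, ha _ hne, by simp⟩)
      simp [hG, hz]
  have e9 : ∑ x ∈ B, G x - ∑ x ∈ B, a x * φ x ^ 2
      = ∑ x ∈ B, (a (x - e) - a x) * φ x ^ 2 := by
    rw [← Finset.sum_sub_distrib]
    exact Finset.sum_congr rfl fun x _ => by simp only [hG]; ring
  have e10 : ∑ x ∈ B, (a (x - e) - a x) * φ x ^ 2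
      = ∑ x ∈ T, (a (x - e) - a x) * φ x ^ 2 := by
    refine (Finset.sum_subset hTB ?_).symm
    intro x _ hx
    have hz : φ x = 0 := by by_contra hne; exact hx (hφ x hne)
    simp [hz]
  rw [e1, e4, e2, e3, e5, e6, e7, e8, e9, e10]

lemma diff_core (T B : Finset (Fin 3 → ℤ)) (e : Fin 3 → ℤ) (φ : (Fin 3 → ℤ) → ℝ)
    (hφ : ∀ x, φ x ≠ 0 → x ∈ T)
    (hB0 : ∀ y ∈ T, y ∈ B) (hBp : ∀ y ∈ T, y + e ∈ B) (hBm : ∀ y ∈ T, y - e ∈ B) :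
    ∑ x ∈ T, φ x * (φ (x + e) + φ (x - e) - 2 * φ x)
      = -∑ x ∈ B, (φ (x + e) - φ x) ^ 2 := by
  have hTB : T ⊆ B := fun y hy => hB0 y hy
  set F : (Fin 3 → ℤ) → ℝ := fun y => φ (y + e) * φ y with hF
  set G : (Fin 3 → ℤ) → ℝ := fun y => φ y ^ 2 with hG
  have e1 : ∑ x ∈ T, φ x * (φ (x + e) + φ (x - e) - 2 * φ x)
      = ∑ x ∈ B, φ x * (φ (x + e) + φ (x - e) - 2 * φ x) := by
    refine Finset.sum_subset hTB ?_
    intro x _ hx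
    have hz : φ x = 0 := by by_contra hne; exact hx (hφ x hne)
    simp [hz]
  have eF : ∑ x ∈ B, F (x + -e) = ∑ x ∈ B, F x := by
    rw [sum_shift F T B (-e) (fun x hx => hφ x (fun h0 => hx (by simp [hF, h0]))) 
      (fun y hy => by simpa [sub_neg_eq_add] using hBp y hy)]
    refine Finset.sum_subset hTB ?_
    intro x _ hx
    have hz : φ x = 0 := by by_contra hne; exact hx (hφ x hne)
    simp [hF, hz]
  have eG : ∑ x ∈ B, G (x + e) = ∑ x ∈ B, G x := by
    rw [sum_shift G T B e (fun x hx => hφ x (fun h0 => hx (by simp [hG, h0]))) hBm]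
    refine Finset.sum_subset hTB ?_
    intro x _ hx
    have hz : φ x = 0 := by by_contra hne; exact hx (hφ x hne)
    simp [hG, hz]
  have split1 : ∑ x ∈ B, φ x * (φ (x + e) + φ (x - e) - 2 * φ x)
      = (∑ x ∈ B, F x) + (∑ x ∈ B, F (x + -e)) - 2 * ∑ x ∈ B, G x := by
    calc ∑ x ∈ B, φ x * (φ (x + e) + φ (x - e) - 2 * φ x)
        = ∑ x ∈ B, (F x + F (x + -e) - 2 * G x) := by
          refine Finset.sum_congr rfl fun x _ => ?_
          have h1 : x + -e + e = x := neg_add_cancel_right x e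
          simp only [hF, hG, h1, ← sub_eq_add_neg]
          ring
      _ = (∑ x ∈ B, F x) + (∑ x ∈ B, F (x + -e)) - 2 * ∑ x ∈ B, G x := by
          rw [Finset.sum_sub_distrib, Finset.sum_add_distrib, ← Finset.mul_sum]
  have split2 : ∑ x ∈ B, (φ (x + e) - φ x) ^ 2
      = (∑ x ∈ B, G (x + e)) + (∑ x ∈ B, G x) - 2 * ∑ x ∈ B, F x := by
    calc ∑ x ∈ B, (φ (x + e) - φ x) ^ 2
        = ∑ x ∈ B, (G (x + e) + G x - 2 * F x) := by
          refine Finset.sum_congr rfl fun x _ => ?_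
          simp only [hF, hG]
          ring
      _ = (∑ x ∈ B, G (x + e)) + (∑ x ∈ B, G x) - 2 * ∑ x ∈ B, F x := by
          rw [Finset.sum_sub_distrib, Finset.sum_add_distrib, ← Finset.mul_sum]
  rw [e1, split1, eF, split2, eG]
  ring

lemma energy (h τ : ℝ) (hh : 0 < h) (hτ : 0 < τ) (T : Finset (Fin 3 → ℤ))
    (un v : (Fin 3 → ℤ) → Fin 3 → ℝ)
    (hun : ∀ x, x ∉ T → un x = 0)
    (hdiv : ∀ x ∈ T, ddiv h un x = 0)
    (hv : ∀ x, x ∉ T → v x = 0)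
    (heq : ∀ x ∈ T, ∀ i, v x i / τ
        + (∑ j, (un (x - gE j) j * Dp h j (fun y => v y i) (x - gE j)
            + un x j * Dp h j (fun y => v y i) x) / 2)
        - (∑ j, Dtwo h j (fun y => v y i) x) = 0) :
    ∀ x ∈ T, v x = 0 := by
  classical
  set B : Finset (Fin 3 → ℤ) :=
    T ∪ Finset.univ.biUnion (fun j : Fin 3 => T.image (· + gE j) ∪ T.image (· - gE j)) with hB
  have hB0 : ∀ y ∈ T, y ∈ B := fun y hy => Finset.mem_union_left _ hy
  have hBp : ∀ j : Fin 3, ∀ y ∈ T, y + gE j ∈ B := by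
    intro j y hy
    refine Finset.mem_union_right _ (Finset.mem_biUnion.mpr ⟨j, Finset.mem_univ _, ?_⟩)
    exact Finset.mem_union_left _ (Finset.mem_image.mpr ⟨y, hy, rfl⟩)
  have hBm : ∀ j : Fin 3, ∀ y ∈ T, y - gE j ∈ B := by
    intro j y hy
    refine Finset.mem_union_right _ (Finset.mem_biUnion.mpr ⟨j, Finset.mem_univ _, ?_⟩)
    exact Finset.mem_union_right _ (Finset.mem_image.mpr ⟨y, hy, rfl⟩)
  have hφ : ∀ i : Fin 3, ∀ x, v x i ≠ 0 → x ∈ T := by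
    intro i x hx
    by_contra hxT
    exact hx (by rw [hv x hxT]; rfl)
  have ha : ∀ j : Fin 3, ∀ x, un x j ≠ 0 → x ∈ T := by
    intro j x hx
    by_contra hxT
    exact hx (by rw [hun x hxT]; rfl)
  -- the three double sums
  set S1 : ℝ := ∑ x ∈ T, ∑ i, v x i * (v x i / τ) with hS1
  set S2 : ℝ := ∑ x ∈ T, ∑ i, v x i *
      (∑ j, (un (x - gE j) j * Dp h j (fun y => v y i) (x - gE j)
          + un x j * Dp h j (fun y => v y i) x) / 2) with hS2
  set S3 : ℝ := ∑ x ∈ T, ∑ i, v x i * (∑ j, Dtwo h j (fun y => v y i) x) with hS3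
  have key : S1 + S2 - S3 = 0 := by
    rw [hS1, hS2, hS3, ← Finset.sum_add_distrib, ← Finset.sum_sub_distrib]
    refine Finset.sum_eq_zero fun x hx => ?_
    rw [← Finset.sum_add_distrib, ← Finset.sum_sub_distrib]
    refine Finset.sum_eq_zero fun i _ => ?_
    have hres := heq x hx i
    calc v x i * (v x i / τ) + v x i *
          (∑ j, (un (x - gE j) j * Dp h j (fun y => v y i) (x - gE j)
              + un x j * Dp h j (fun y => v y i) x) / 2)
          - v x i * (∑ j, Dtwo h j (fun y => v y i) x)
        = v x i * (v x i / τ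
            + (∑ j, (un (x - gE j) j * Dp h j (fun y => v y i) (x - gE j)
                + un x j * Dp h j (fun y => v y i) x) / 2)
            - (∑ j, Dtwo h j (fun y => v y i) x)) := by ring
      _ = 0 := by rw [hres, mul_zero]
  -- convection sum vanishes
  have hS2eval : S2 = 0 := by
    have hper : ∀ i j : Fin 3,
        ∑ x ∈ T, v x i * ((un (x - gE j) j * Dp h j (fun y => v y i) (x - gE j)
            + un x j * Dp h j (fun y => v y i) x) / 2)
          = ∑ x ∈ T, ((un (x - gE j) j - un x j) * v x i ^ 2) / (2 * h) := by
      intro i j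
      have hcore := conv_core T B (gE j) (fun y => v y i) (fun y => un y j)
        (hφ i) (ha j) hB0 (hBp j) (hBm j)
      calc ∑ x ∈ T, v x i * ((un (x - gE j) j * Dp h j (fun y => v y i) (x - gE j)
              + un x j * Dp h j (fun y => v y i) x) / 2)
          = ∑ x ∈ T, (v x i * (un (x - gE j) j * (v x i - v (x - gE j) i)
              + un x j * (v (x + gE j) i - v x i))) / (2 * h) := by
            refine Finset.sum_congr rfl fun x _ => ?_
            have hne : h ≠ 0 := ne_of_gt hh
            simp only [Dp, sub_add_cancel]
            field_simp
        _ = (∑ x ∈ T, v x i * (un (x - gE j) j * (v x i - v (x - gE j) i)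
              + un x j * (v (x + gE j) i - v x i))) / (2 * h) := by
            rw [Finset.sum_div]
        _ = (∑ x ∈ T, (un (x - gE j) j - un x j) * v x i ^ 2) / (2 * h) := by
            rw [hcore]
        _ = ∑ x ∈ T, ((un (x - gE j) j - un x j) * v x i ^ 2) / (2 * h) := by
            rw [Finset.sum_div]
    have hdiv' : ∀ x ∈ T, ∑ j, (un (x - gE j) j - un x j) = 0 := by
      intro x hx
      have hd := hdiv x hx
      rw [ddiv, ← Finset.sum_div, div_eq_zero_iff] at hd
      have hsum : ∑ j, (un x j - un (x - gE j) j) = 0 := hd.resolve_right (ne_of_gt hh)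
      have : ∑ j, (un (x - gE j) j - un x j) = -∑ j, (un x j - un (x - gE j) j) := by
        rw [← Finset.sum_neg_distrib]
        exact Finset.sum_congr rfl fun j _ => by ring
      rw [this, hsum, neg_zero]
    calc S2 = ∑ x ∈ T, ∑ i : Fin 3, ∑ j : Fin 3, v x i *
          ((un (x - gE j) j * Dp h j (fun y => v y i) (x - gE j)
            + un x j * Dp h j (fun y => v y i) x) / 2) := by
          rw [hS2]
          refine Finset.sum_congr rfl fun x _ => Finset.sum_congr rfl fun i _ => ?_
          rw [Finset.mul_sum]
      _ = ∑ i : Fin 3, ∑ j : Fin 3, ∑ x ∈ T, v x i *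
          ((un (x - gE j) j * Dp h j (fun y => v y i) (x - gE j)
            + un x j * Dp h j (fun y => v y i) x) / 2) := by
          rw [Finset.sum_comm]
          exact Finset.sum_congr rfl fun i _ => Finset.sum_comm
      _ = ∑ i : Fin 3, ∑ j : Fin 3, ∑ x ∈ T, ((un (x - gE j) j - un x j) * v x i ^ 2) / (2 * h) := by
          exact Finset.sum_congr rfl fun i _ => Finset.sum_congr rfl fun j _ => hper i j
      _ = ∑ i : Fin 3, ∑ x ∈ T, (∑ j : Fin 3, (un (x - gE j) j - un x j)) * v x i ^ 2 / (2 * h) := by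
          refine Finset.sum_congr rfl fun i _ => ?_
          rw [Finset.sum_comm]
          refine Finset.sum_congr rfl fun x _ => ?_
          rw [Finset.sum_mul, Finset.sum_div]
      _ = 0 := by
          refine Finset.sum_eq_zero fun i _ => Finset.sum_eq_zero fun x hx => ?_
          rw [hdiv' x hx, zero_mul, zero_div]
  -- diffusion sum
  have hS3eval : S3 = -∑ i : Fin 3, ∑ j : Fin 3,
      (∑ x ∈ B, (v (x + gE j) i - v x i) ^ 2) / h ^ 2 := by
    have hper : ∀ i j : Fin 3,
        ∑ x ∈ T, v x i * Dtwo h j (fun y => v y i) x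
          = -((∑ x ∈ B, (v (x + gE j) i - v x i) ^ 2) / h ^ 2) := by
      intro i j
      have hcore := diff_core T B (gE j) (fun y => v y i) (hφ i) hB0 (hBp j) (hBm j)
      calc ∑ x ∈ T, v x i * Dtwo h j (fun y => v y i) x
          = ∑ x ∈ T, (v x i * (v (x + gE j) i + v (x - gE j) i - 2 * v x i)) / h ^ 2 := by
            refine Finset.sum_congr rfl fun x _ => ?_
            simp only [Dtwo]
            ring
        _ = (∑ x ∈ T, v x i * (v (x + gE j) i + v (x - gE j) i - 2 * v x i)) / h ^ 2 := by
            rw [Finset.sum_div]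
        _ = -((∑ x ∈ B, (v (x + gE j) i - v x i) ^ 2) / h ^ 2) := by
            rw [hcore]; ring
    calc S3 = ∑ x ∈ T, ∑ i : Fin 3, ∑ j : Fin 3, v x i * Dtwo h j (fun y => v y i) x := by
          rw [hS3]
          exact Finset.sum_congr rfl fun x _ => Finset.sum_congr rfl fun i _ => Finset.mul_sum _ _ _
      _ = ∑ i : Fin 3, ∑ j : Fin 3, ∑ x ∈ T, v x i * Dtwo h j (fun y => v y i) x := by
          rw [Finset.sum_comm]
          exact Finset.sum_congr rfl fun i _ => Finset.sum_comm
      _ = ∑ i : Fin 3, ∑ j : Fin 3,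
          -((∑ x ∈ B, (v (x + gE j) i - v x i) ^ 2) / h ^ 2) := by
          exact Finset.sum_congr rfl fun i _ => Finset.sum_congr rfl fun j _ => hper i j
      _ = -∑ i : Fin 3, ∑ j : Fin 3, (∑ x ∈ B, (v (x + gE j) i - v x i) ^ 2) / h ^ 2 := by
          simp [Finset.sum_neg_distrib]
  -- conclude S1 = 0
  have hS3le : S3 ≤ 0 := by
    rw [hS3eval, neg_nonpos]
    refine Finset.sum_nonneg fun i _ => Finset.sum_nonneg fun j _ => ?_
    positivity
  have hS1ge : 0 ≤ S1 := by
    rw [hS1]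
    refine Finset.sum_nonneg fun x _ => Finset.sum_nonneg fun i _ => ?_
    have : v x i * (v x i / τ) = v x i ^ 2 / τ := by ring
    rw [this]
    positivity
  have hS1zero : S1 = 0 := by
    rw [hS2eval] at key
    linarith
  -- extract pointwise vanishing
  intro x hx
  funext i
  have houter := (Finset.sum_eq_zero_iff_of_nonneg (fun y _ =>
      Finset.sum_nonneg fun i _ => by
        have : v y i * (v y i / τ) = v y i ^ 2 / τ := by ring
        rw [this]; positivity)).mp hS1zero x hx
  have hinner := (Finset.sum_eq_zero_iff_of_nonneg (fun i _ => by
      have : v x i * (v x i / τ) = v x i ^ 2 / τ := by ring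
      rw [this]; positivity)).mp houter i (Finset.mem_univ i)
  have hsq : v x i ^ 2 / τ = 0 := by rw [← hinner]; ring
  show v x i = 0
  field_simp at hsq
  simpa using hsq

noncomputable def extT (T : Finset (Fin 3 → ℤ)) (w : {x // x ∈ T} → Fin 3 → ℝ) :
    (Fin 3 → ℤ) → Fin 3 → ℝ :=
  fun x => if hx : x ∈ T then w ⟨x, hx⟩ else 0

lemma extT_add (T : Finset (Fin 3 → ℤ)) (w w' : {x // x ∈ T} → Fin 3 → ℝ) (y : Fin 3 → ℤ)
    (i : Fin 3) : extT T (w + w') y i = extT T w y i + extT T w' y i := by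
  unfold extT; split <;> simp

lemma extT_smul (T : Finset (Fin 3 → ℤ)) (c : ℝ) (w : {x // x ∈ T} → Fin 3 → ℝ)
    (y : Fin 3 → ℤ) (i : Fin 3) : extT T (c • w) y i = c * extT T w y i := by
  unfold extT; split <;> simp

noncomputable def Lop (h τ : ℝ) (T : Finset (Fin 3 → ℤ)) (un : (Fin 3 → ℤ) → Fin 3 → ℝ) :
    ({x // x ∈ T} → Fin 3 → ℝ) →ₗ[ℝ] ({x // x ∈ T} → Fin 3 → ℝ) where
  toFun w := fun x i =>
    extT T w x i / τ
      + (∑ j, (un ((x : Fin 3 → ℤ) - gE j) j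
            * Dp h j (fun y => extT T w y i) ((x : Fin 3 → ℤ) - gE j)
          + un x j * Dp h j (fun y => extT T w y i) x) / 2)
      - ∑ j, Dtwo h j (fun y => extT T w y i) x
  map_add' w w' := by
    funext x i
    simp only [Pi.add_apply, Dp, Dtwo, extT_add, Fin.sum_univ_three]
    ring
  map_smul' c w := by
    funext x i
    simp only [Pi.smul_apply, smul_eq_mul, RingHom.id_apply, Dp, Dtwo, extT_smul,
      Fin.sum_univ_three]
    ring

/-- Theorem 3.1: unconditional unique solvability of the
implicit finite-difference step. -/
theorem implicit_step_unique_solvability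
    (h τ : ℝ) (hh : 0 < h) (hτ : 0 < τ) (Ω : Finset (Fin 3 → ℤ))
    (un f : (Fin 3 → ℤ) → Fin 3 → ℝ)
    (hun0 : ∀ x, x ∉ Ω → un x = 0) (hunb : ∀ x ∈ gBdry Ω, un x = 0)
    (hdiv : ∀ x ∈ Ω \ gBdry Ω, ddiv h un x = 0) :
    ∃! v : (Fin 3 → ℤ) → Fin 3 → ℝ,
      (∀ x, x ∉ Ω → v x = 0) ∧ (∀ x ∈ gBdry Ω, v x = 0) ∧
      ∀ x ∈ Ω \ gBdry Ω, ∀ i : Fin 3,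
        (v x i - un x i) / τ =
          -(∑ j, (un (x - gE j) j * Dp h j (fun y => v y i) (x - gE j)
              + un x j * Dp h j (fun y => v y i) x) / 2)
          + (∑ j, Dtwo h j (fun y => v y i) x) + f x i := by
  classical
  set T : Finset (Fin 3 → ℤ) := Ω \ gBdry Ω with hT
  have hnotT : ∀ x, x ∉ T → x ∉ Ω ∨ x ∈ gBdry Ω := by
    intro x hx
    by_cases hΩ : x ∈ Ω
    · right
      by_contra hb
      exact hx (Finset.mem_sdiff.mpr ⟨hΩ, hb⟩)
    · exact Or.inl hΩ
  have hun0T : ∀ x, x ∉ T → un x = 0 := by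
    intro x hx
    rcases hnotT x hx with h' | h'
    · exact hun0 x h'
    · exact hunb x h'
  have hInj : Function.Injective (Lop h τ T un) := by
    rw [injective_iff_map_eq_zero]
    intro w hw
    set v : (Fin 3 → ℤ) → Fin 3 → ℝ := extT T w with hv
    have hvT : ∀ x, x ∉ T → v x = 0 := by
      intro x hx
      funext i
      simp [hv, extT, hx]
    have heq : ∀ x ∈ T, ∀ i, v x i / τ
        + (∑ j, (un (x - gE j) j * Dp h j (fun y => v y i) (x - gE j)
            + un x j * Dp h j (fun y => v y i) x) / 2)
        - (∑ j, Dtwo h j (fun y => v y i) x) = 0 := by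
      intro x hx i
      have hcomp := congrFun (congrFun hw ⟨x, hx⟩) i
      simpa [Lop, hv] using hcomp
    have hzero := energy h τ hh hτ T un v hun0T hdiv hvT heq
    funext p
    have hp := hzero p p.2
    funext i
    have hpi := congrFun hp i
    simpa [hv, extT, p.2] using hpi
  have hSurj : Function.Surjective (Lop h τ T un) :=
    LinearMap.injective_iff_surjective.mp hInj
  obtain ⟨w, hwEq⟩ := hSurj (fun (p : {x // x ∈ T}) i => un p.1 i / τ + f p.1 i)
  refine ⟨extT T w, ⟨?_, ?_, ?_⟩, ?_⟩
  · intro x hx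
    have hxT : x ∉ T := by
      intro hmem
      exact hx (Finset.mem_sdiff.mp hmem).1
    funext i
    simp [extT, hxT]
  · intro x hx
    have hxT : x ∉ T := by
      intro hmem
      exact (Finset.mem_sdiff.mp hmem).2 hx
    funext i
    simp [extT, hxT]
  · intro x hx i
    have hxT : x ∈ T := hx
    have hcomp := congrFun (congrFun hwEq ⟨x, hxT⟩) i
    simp only [Lop, LinearMap.coe_mk, AddHom.coe_mk] at hcomp
    rw [sub_div]
    linarith [hcomp]
  · intro v' hv'
    obtain ⟨h1, h2, h3⟩ := hv'
    have hv'0 : ∀ x, x ∉ T → v' x = 0 := by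
      intro x hx
      rcases hnotT x hx with h' | h'
      · exact h1 x h'
      · exact h2 x h'
    have hrepr : extT T (fun p : {x // x ∈ T} => v' p.1) = v' := by
      funext x
      by_cases hx : x ∈ T
      · simp [extT, hx]
      · simp [extT, hx, hv'0 x hx]
    have hfun : ∀ i : Fin 3, (fun y => extT T (fun p : {x // x ∈ T} => v' p.1) y i) = fun y => v' y i := by
      intro i
      funext y
      rw [congrFun hrepr y]
    have hLv' : Lop h τ T un (fun p : {x // x ∈ T} => v' p.1) = (fun (p : {x // x ∈ T}) i => un p.1 i / τ + f p.1 i) := by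
      funext p i
      simp only [Lop, LinearMap.coe_mk, AddHom.coe_mk, hfun, congrFun hrepr]
      have h3' := h3 p p.2 i
      rw [sub_div] at h3'
      linarith [h3']
    have hwEq' : (fun p : {x // x ∈ T} => v' p.1) = w := hInj (by rw [hLv', hwEq])
    rw [← hrepr, hwEq']
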